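/- Let φ = (1+√5)/2 and b = (1+φ)/2. The four points (b,b,b), (b,−b,−b), (−b,b,−b), (−b,−b,b) are pairwise at distance √2·(1+φ) (≈ 3.7025), their convex hull contains the twelve points (0, ±1/2, ±φ/2), (±φ/2, 0, ±1/2), (±1/2, ±φ/2, 0) (the vertices of a regular icosahedron of edge 1), and the volume (Lebesgue measure) of this convex hull equals (9+4√5)/3 (≈ 5.9816); i.e. a regular icosahedron of edge 1 is contained in a regular tetrahedron of edge √2·(1+φ). -/

import Mathlib

open MeasureTheory

/-- A point of `ℝ³` (as `EuclideanSpace ℝ (Fin 3)`) from its coordinates. -/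
noncomputable def pt (x y z : ℝ) : EuclideanSpace ℝ (Fin 3) := WithLp.toLp 2 ![x, y, z]

/-- The golden ratio. -/
noncomputable def φ : ℝ := (1 + Real.sqrt 5) / 2

/-- The twelve vertices of a regular icosahedron of edge length 1. -/
noncomputable def icoVerts1 : Set (EuclideanSpace ℝ (Fin 3)) :=
  {pt 0 (1 / 2) (φ / 2), pt 0 (1 / 2) (-(φ / 2)), pt 0 (-(1 / 2)) (φ / 2),
   pt 0 (-(1 / 2)) (-(φ / 2)),
   pt (φ / 2) 0 (1 / 2), pt (φ / 2) 0 (-(1 / 2)), pt (-(φ / 2)) 0 (1 / 2),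
   pt (-(φ / 2)) 0 (-(1 / 2)),
   pt (1 / 2) (φ / 2) 0, pt (1 / 2) (-(φ / 2)) 0, pt (-(1 / 2)) (φ / 2) 0,
   pt (-(1 / 2)) (-(φ / 2)) 0}

/-- For `b`, the tetrahedron vertices `(b,b,b)`, `(b,−b,−b)`, `(−b,b,−b)`, `(−b,−b,b)`. -/
noncomputable def tetVert (b : ℝ) : Fin 4 → EuclideanSpace ℝ (Fin 3) :=
  ![pt b b b, pt b (-b) (-b), pt (-b) b (-b), pt (-b) (-b) b]

section Aux

lemma dist_pt (x y z x' y' z' : ℝ) :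
    dist (pt x y z) (pt x' y' z') =
      Real.sqrt ((x - x')^2 + (y - y')^2 + (z - z')^2) := by
  rw [EuclideanSpace.dist_eq]
  simp [pt, Fin.sum_univ_three, sq, Real.dist_eq, abs_mul_abs_self]

lemma part1 : (∀ i j, i ≠ j →
      dist (tetVert ((1 + φ) / 2) i) (tetVert ((1 + φ) / 2) j) = Real.sqrt 2 * (1 + φ)) := by
  have h5 : (0:ℝ) ≤ Real.sqrt 5 := Real.sqrt_nonneg 5
  have hb : (0:ℝ) ≤ 1 + φ := by unfold φ; linarith
  intro i j hij
  fin_cases i <;> fin_cases j <;> simp_all [tetVert, dist_pt, dist_comm] <;>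
    · rw [show Real.sqrt 2 * (1 + φ) = Real.sqrt (2 * (1+φ)^2) by
        rw [Real.sqrt_mul (by norm_num), Real.sqrt_sq hb]]
      congr 1
      ring

lemma mem_tet {b x y z : ℝ} (hb : 0 < b)
    (h0 : -b ≤ x + y + z) (h1 : -b ≤ x - y - z) (h2 : -b ≤ -x + y - z) (h3 : -b ≤ -x - y + z) :
    pt x y z ∈ convexHull ℝ (Set.range (tetVert b)) := by
  set w : Fin 4 → ℝ := ![(b+x+y+z)/(4*b), (b+x-y-z)/(4*b), (b-x+y-z)/(4*b), (b-x-y+z)/(4*b)] with hw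
  have hsum : ∑ i, w i = 1 := by
    simp [hw, Fin.sum_univ_four]
    field_simp
    ring
  have hpos : ∀ i ∈ Finset.univ, (0:ℝ) ≤ w i := by
    intro i _
    fin_cases i <;> simp [hw] <;> apply div_nonneg <;> linarith
  have := Finset.centerMass_mem_convexHull (Finset.univ) hpos (by rw [hsum]; norm_num)
    (fun i _ => Set.mem_range_self (f := tetVert b) i)
  rw [Finset.centerMass_eq_of_sum_1 _ _ hsum] at this
  convert this using 1
  have hb' : (4:ℝ)*b ≠ 0 := by positivity
  ext j
  simp only [Fin.sum_univ_four, hw, tetVert, pt]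
  fin_cases j <;>
    simp [PiLp.add_apply, PiLp.smul_apply, smul_eq_mul] <;> field_simp <;> ring

lemma part2 : icoVerts1 ⊆ convexHull ℝ (Set.range (tetVert ((1 + φ) / 2))) := by
  have h5 : (0:ℝ) ≤ Real.sqrt 5 := Real.sqrt_nonneg 5
  have hφ : (0:ℝ) < φ := by unfold φ; linarith
  have hb : (0:ℝ) < (1 + φ)/2 := by linarith
  intro p hp
  simp only [icoVerts1, Set.mem_insert_iff, Set.mem_singleton_iff] at hp
  rcases hp with rfl|rfl|rfl|rfl|rfl|rfl|rfl|rfl|rfl|rfl|rfl|rfl <;>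
    exact mem_tet hb (by linarith) (by linarith) (by linarith) (by linarith)

-- the closed corner simplex in pi space
def S : Set (Fin 3 → ℝ) := {x | (∀ i, 0 ≤ x i) ∧ ∑ i, x i ≤ 1}

lemma measurableS : MeasurableSet S := by
  have : S = (⋂ i, {x : Fin 3 → ℝ | 0 ≤ x i}) ∩ {x | ∑ i, x i ≤ 1} := by
    ext x; simp [S, Set.mem_iInter]
  rw [this]
  refine MeasurableSet.inter (MeasurableSet.iInter fun i => ?_) ?_
  · exact measurableSet_le measurable_const (measurable_pi_apply i)
  · exact measurableSet_le (by fun_prop) measurable_const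

noncomputable def sg (ε : Fin 3 → Bool) : Fin 3 → ℝ := fun i => if ε i then 1 else -1

noncomputable def refl3 (ε : Fin 3 → Bool) : (Fin 3 → ℝ) →ₗ[ℝ] (Fin 3 → ℝ) :=
  Matrix.toLin' (Matrix.diagonal (sg ε))

lemma refl3_apply (ε : Fin 3 → Bool) (x : Fin 3 → ℝ) (i : Fin 3) :
    refl3 ε x i = sg ε i * x i := by
  simp [refl3, Matrix.toLin'_apply, Matrix.mulVec_diagonal]

lemma sg_sq (ε : Fin 3 → Bool) (i : Fin 3) : sg ε i * sg ε i = 1 := by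
  unfold sg; split <;> norm_num

lemma abs_sg (ε : Fin 3 → Bool) (i : Fin 3) : |sg ε i| = 1 := by
  unfold sg; split <;> norm_num

lemma refl3_det (ε : Fin 3 → Bool) : |LinearMap.det (refl3 ε)| = 1 := by
  rw [refl3, LinearMap.det_toLin', Matrix.det_diagonal, Finset.abs_prod]
  simp [abs_sg]

lemma refl3_invol (ε : Fin 3 → Bool) (x : Fin 3 → ℝ) : refl3 ε (refl3 ε x) = x := by
  funext i; rw [refl3_apply, refl3_apply, ← mul_assoc, sg_sq, one_mul]

lemma refl3_image (ε : Fin 3 → Bool) (A : Set (Fin 3 → ℝ)) :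
    refl3 ε '' A = refl3 ε ⁻¹' A := by
  ext x
  constructor
  · rintro ⟨y, hy, rfl⟩; simpa [Set.mem_preimage, refl3_invol] using hy
  · intro hx; exact ⟨refl3 ε x, hx, refl3_invol ε x⟩

lemma volC : volume {x : Fin 3 → ℝ | ∑ i, |x i| ≤ 1} = ENNReal.ofReal (4/3) := by
  have := MeasureTheory.volume_sum_rpow_le (ι := Fin 3) (p := 1) le_rfl 1
  simp only [Real.rpow_one, Fintype.card_fin] at this
  rw [show ((3:ℕ):ℝ)/1 + 1 = ((3:ℕ):ℝ) + 1 by norm_num, Real.Gamma_nat_eq_factorial,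
    show (1:ℝ)/1 + 1 = ((1:ℕ):ℝ) + 1 by norm_num, Real.Gamma_nat_eq_factorial] at this
  norm_num at this
  rw [this]

def S' : Set (Fin 3 → ℝ) := {x | (∀ i, 0 < x i) ∧ ∑ i, x i ≤ 1}

lemma measurableS' : MeasurableSet S' := by
  have : S' = (⋂ i, {x : Fin 3 → ℝ | 0 < x i}) ∩ {x | ∑ i, x i ≤ 1} := by
    ext x; simp [S', Set.mem_iInter]
  rw [this]
  refine MeasurableSet.inter (MeasurableSet.iInter fun i => ?_) ?_
  · exact measurableSet_lt measurable_const (measurable_pi_apply i)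
  · exact measurableSet_le (by fun_prop) measurable_const

lemma volS'_eq : volume S' = volume S := by
  refine le_antisymm (measure_mono fun x hx => ⟨fun i => (hx.1 i).le, hx.2⟩) ?_
  have hnull : volume (⋃ i : Fin 3, {x : Fin 3 → ℝ | x i = 0}) = 0 := by
    refine measure_iUnion_null fun i => ?_
    have : {x : Fin 3 → ℝ | x i = 0} = (LinearMap.ker (LinearMap.proj (R := ℝ)
        (φ := fun _ : Fin 3 => ℝ) i) : Submodule ℝ (Fin 3 → ℝ)) := by
      ext x; simp [LinearMap.mem_ker]
    rw [this]
    refine Measure.addHaar_submodule _ _ ?_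
    intro h
    have h1 : (fun _ => (1:ℝ)) ∈ (LinearMap.ker (LinearMap.proj (R := ℝ)
        (φ := fun _ : Fin 3 => ℝ) i) : Submodule ℝ (Fin 3 → ℝ)) := h ▸ trivial
    simp [LinearMap.mem_ker] at h1
  have hsub : S ⊆ S' ∪ ⋃ i : Fin 3, {x : Fin 3 → ℝ | x i = 0} := by
    intro x hx
    by_cases h : ∀ i, 0 < x i
    · exact Or.inl ⟨h, hx.2⟩
    · push_neg at h
      obtain ⟨i, hi⟩ := h
      exact Or.inr (Set.mem_iUnion.2 ⟨i, le_antisymm hi (hx.1 i)⟩)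
  calc volume S ≤ volume (S' ∪ ⋃ i : Fin 3, {x : Fin 3 → ℝ | x i = 0}) := measure_mono hsub
    _ ≤ volume S' + volume (⋃ i : Fin 3, {x : Fin 3 → ℝ | x i = 0}) := measure_union_le _ _
    _ = volume S' := by rw [hnull, add_zero]

lemma volS : volume S = ENNReal.ofReal (1/6) := by
  have himg : ∀ ε : Fin 3 → Bool, ∀ A : Set (Fin 3 → ℝ),
      volume (refl3 ε '' A) = volume A := by
    intro ε A
    rw [Measure.addHaar_image_linearMap, refl3_det]
    simp
  -- upper: C ⊆ ⋃ ε, refl3 ε '' S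
  have hCsub : {x : Fin 3 → ℝ | ∑ i, |x i| ≤ 1} ⊆ ⋃ ε : Fin 3 → Bool, refl3 ε '' S := by
    intro x hx
    refine Set.mem_iUnion.2 ⟨fun i => decide (0 ≤ x i), ⟨fun i => |x i|, ⟨fun i => abs_nonneg _, hx⟩, ?_⟩⟩
    funext i
    rw [refl3_apply]
    unfold sg
    by_cases h : 0 ≤ x i
    · simp [h, abs_of_nonneg]
    · simp only [h, decide_false, if_false, if_neg]
      rw [abs_of_neg (lt_of_not_ge h)]
      simp
  -- lower: images of S' are in C and pairwise disjoint
  have hsubC : ∀ ε : Fin 3 → Bool, refl3 ε '' S' ⊆ {x : Fin 3 → ℝ | ∑ i, |x i| ≤ 1} := by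
    rintro ε x ⟨y, hy, rfl⟩
    have : ∀ i, |refl3 ε y i| = y i := by
      intro i
      rw [refl3_apply, abs_mul, abs_sg, one_mul, abs_of_pos (hy.1 i)]
    simpa [this] using hy.2
  have hdisj : Pairwise (Function.onFun Disjoint fun ε : Fin 3 → Bool => refl3 ε '' S') := by
    intro ε ε' hne
    rw [Function.onFun, Set.disjoint_left]
    rintro x ⟨y, hy, rfl⟩ ⟨z, hz, hzx⟩
    obtain ⟨i, hi⟩ := Function.ne_iff.1 hne
    have h1 : refl3 ε y i = sg ε i * y i := refl3_apply _ _ _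
    have h2 : refl3 ε' z i = sg ε' i * z i := refl3_apply _ _ _
    have := congrFun hzx i
    rw [h2, h1] at this
    unfold sg at this
    rcases Bool.eq_false_or_eq_true (ε i) with h | h <;>
      rcases Bool.eq_false_or_eq_true (ε' i) with h' | h' <;>
      simp [h, h'] at hi this <;> nlinarith [hy.1 i, hz.1 i]
  have hmeas : ∀ ε : Fin 3 → Bool, MeasurableSet (refl3 ε '' S') := by
    intro ε
    rw [refl3_image]
    exact measurableS'.preimage (refl3 ε).continuous_of_finiteDimensional.measurable
  have hcard : ∀ c : ENNReal, ∑ _ε : Fin 3 → Bool, c = 8 * c := by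
    intro c
    rw [Finset.sum_const, Finset.card_univ]
    simp only [Fintype.card_fun, Fintype.card_bool, Fintype.card_fin]
    rw [show (2^3 : ℕ) = 8 by norm_num, nsmul_eq_mul]
    norm_num
  have hup : volume {x : Fin 3 → ℝ | ∑ i, |x i| ≤ 1} ≤ 8 * volume S := by
    refine (measure_mono hCsub).trans ((measure_iUnion_fintype_le _ _).trans ?_)
    simp only [himg]
    exact (hcard _).le
  have hlo : 8 * volume S ≤ volume {x : Fin 3 → ℝ | ∑ i, |x i| ≤ 1} := by
    have h1 : volume (⋃ ε : Fin 3 → Bool, refl3 ε '' S') = 8 * volume S := by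
      rw [measure_iUnion hdisj hmeas, tsum_fintype]
      simp only [himg, volS'_eq]
      exact hcard _
    rw [← h1]
    exact measure_mono (Set.iUnion_subset hsubC)
  have h8 : (8:ENNReal) * volume S = ENNReal.ofReal (4/3) := by
    rw [← volC]; exact le_antisymm hlo hup
  have : (8:ENNReal) * volume S = 8 * ENNReal.ofReal (1/6) := by
    rw [h8, show ENNReal.ofReal (4/3) = ENNReal.ofReal (8 * (1/6)) by norm_num,
      ENNReal.ofReal_mul (by norm_num)]
    norm_num
  exact (ENNReal.mul_right_strictMono (by norm_num) (by norm_num)).injective this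

noncomputable def corner : Fin 4 → (Fin 3 → ℝ) := ![0, Pi.single 0 1, Pi.single 1 1, Pi.single 2 1]

lemma convexS : Convex ℝ S := by
  intro x hx y hy a b ha hb hab
  constructor
  · intro i
    have := hx.1 i; have := hy.1 i
    simp only [Pi.add_apply, Pi.smul_apply, smul_eq_mul]
    nlinarith
  · have hsx := hx.2; have hsy := hy.2
    simp only [Pi.add_apply, Pi.smul_apply, smul_eq_mul, Finset.sum_add_distrib,
      ← Finset.mul_sum]
    nlinarith [hx.2, hy.2, Finset.sum_nonneg (fun i (_ : i ∈ Finset.univ) => hx.1 i),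
      Finset.sum_nonneg (fun i (_ : i ∈ Finset.univ) => hy.1 i)]

lemma hullCorner : convexHull ℝ (Set.range corner) = S := by
  apply Set.Subset.antisymm
  · apply convexHull_min _ convexS
    have hs : ∀ (k i : Fin 3), (0:ℝ) ≤ (Pi.single k 1 : Fin 3 → ℝ) i := by
      intro k i
      rcases eq_or_ne i k with rfl | h
      · simp
      · simp [Pi.single_eq_of_ne h]
    rintro _ ⟨j, rfl⟩
    fin_cases j <;> refine ⟨fun i => ?_, ?_⟩
    · simp [corner]
    · simp [corner]
    · exact hs 0 i
    · simp [corner, Fin.sum_univ_three]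
    · exact hs 1 i
    · simp [corner, Fin.sum_univ_three]
    · exact hs 2 i
    · simp [corner, Fin.sum_univ_three]
  · intro x hx
    set w : Fin 4 → ℝ := ![1 - (x 0 + x 1 + x 2), x 0, x 1, x 2] with hw
    have hx3 : x 0 + x 1 + x 2 ≤ 1 := by
      have := hx.2; rwa [Fin.sum_univ_three] at this
    have hsum : ∑ i, w i = 1 := by simp [hw, Fin.sum_univ_four]; ring
    have hpos : ∀ i ∈ Finset.univ, (0:ℝ) ≤ w i := by
      intro i _
      fin_cases i <;> simp [hw] <;> [linarith; exact hx.1 0; exact hx.1 1; exact hx.1 2]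
    have hmem := Finset.centerMass_mem_convexHull (Finset.univ) hpos
      (by rw [hsum]; norm_num) (fun i _ => Set.mem_range_self (f := corner) i)
    rw [Finset.centerMass_eq_of_sum_1 _ _ hsum] at hmem
    convert hmem using 1
    funext i
    simp only [Fin.sum_univ_four, hw, corner]
    fin_cases i <;> simp [Pi.single_apply]

open Pointwise in
noncomputable def tetPi (b : ℝ) : Fin 4 → (Fin 3 → ℝ) :=
  ![![b,b,b], ![b,-b,-b], ![-b,b,-b], ![-b,-b,b]]

noncomputable def Mt (b : ℝ) : Matrix (Fin 3) (Fin 3) ℝ :=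
  !![0,-2*b,-2*b; -2*b,0,-2*b; -2*b,-2*b,0]

lemma det_Mt (b : ℝ) : (Mt b).det = -(16*b^3) := by
  simp [Mt, Matrix.det_fin_three, Matrix.vecHead, Matrix.vecTail]; ring

lemma tetPi_eq (b : ℝ) :
    tetPi b = (fun x => ![b,b,b] + Matrix.toLin' (Mt b) x) ∘ corner := by
  funext j
  fin_cases j <;> funext i <;> fin_cases i <;>
    simp [tetPi, corner, Mt, Matrix.toLin'_apply, Matrix.mulVec, dotProduct,
      Fin.sum_univ_three, Pi.single_apply, Matrix.vecHead, Matrix.vecTail] <;> ring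

open Pointwise in
lemma volTetPi (b : ℝ) (hb : 0 < b) :
    volume (convexHull ℝ (Set.range (tetPi b))) = ENNReal.ofReal ((16*b^3) * (1/6)) := by
  have him : ((fun x => ![b,b,b] + Matrix.toLin' (Mt b) x) '' Set.range corner)
      = ![b,b,b] +ᵥ (Matrix.toLin' (Mt b) '' Set.range corner) := by
    rw [← Set.image_vadd, Set.image_image]
    rfl
  have h1 : convexHull ℝ (Set.range (tetPi b))
      = ![b,b,b] +ᵥ (Matrix.toLin' (Mt b) '' S) := by
    rw [tetPi_eq, Set.range_comp, him, convexHull_vadd,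
      ← LinearMap.image_convexHull, hullCorner]
  rw [h1, measure_vadd, Measure.addHaar_image_linearMap, LinearMap.det_toLin', det_Mt,
    abs_neg, abs_of_pos (by positivity), volS, ← ENNReal.ofReal_mul (by positivity)]

lemma volume_euclidean_eq (A : Set (Fin 3 → ℝ)) (hA : MeasurableSet A) :
    (volume : Measure (EuclideanSpace ℝ (Fin 3))) (WithLp.ofLp ⁻¹' A) = volume A := by
  have h := (PiLp.volume_preserving_ofLp (ι := Fin 3)).measure_preimage
    hA.nullMeasurableSet
  convert h using 2

lemma part3 : volume (convexHull ℝ (Set.range (tetVert ((1 + φ) / 2))))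
      = ENNReal.ofReal ((9 + 4 * Real.sqrt 5) / 3) := by
  have h5 : (0:ℝ) ≤ Real.sqrt 5 := Real.sqrt_nonneg 5
  have hb : (0:ℝ) < (1 + φ)/2 := by unfold φ; linarith
  have hmeas : MeasurableSet (convexHull ℝ (Set.range (tetPi ((1+φ)/2)))) :=
    ((Set.finite_range _).isCompact_convexHull (𝕜 := ℝ)).isClosed.measurableSet
  have hbridge := volume_euclidean_eq _ hmeas
  have hstep : volume (convexHull ℝ (Set.range (tetVert ((1 + φ) / 2))))
      = volume (convexHull ℝ (Set.range (tetPi ((1+φ)/2)))) := by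
    rw [← hbridge]
    congr 1
    have ht : tetVert ((1+φ)/2) = (WithLp.linearEquiv 2 ℝ (Fin 3 → ℝ)).symm ∘ tetPi ((1+φ)/2) := by
      funext j; fin_cases j <;> rfl
    rw [ht, Set.range_comp, ← LinearEquiv.coe_coe, ← LinearMap.image_convexHull, LinearEquiv.coe_coe,
      LinearEquiv.image_symm_eq_preimage]
    rfl
  rw [hstep, volTetPi _ hb]
  congr 1
  have hsq : Real.sqrt 5 ^ 2 = 5 := Real.sq_sqrt (by norm_num)
  unfold φ
  ring_nf
  nlinarith [hsq]

end Aux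

theorem minimal_regular_tetrahedron_containing_unit_icosahedron :
    (∀ i j, i ≠ j →
      dist (tetVert ((1 + φ) / 2) i) (tetVert ((1 + φ) / 2) j) = Real.sqrt 2 * (1 + φ)) ∧
    icoVerts1 ⊆ convexHull ℝ (Set.range (tetVert ((1 + φ) / 2))) ∧
    volume (convexHull ℝ (Set.range (tetVert ((1 + φ) / 2))))
      = ENNReal.ofReal ((9 + 4 * Real.sqrt 5) / 3) :=
  ⟨part1, part2, part3⟩
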